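/- arXiv:0805.4502 — 2 statements merged into one kernel-verified Lean document; each statement's English description precedes it below -/
import Mathlib

section
/- For any nonzero Golden codewords X₁, X₂ ∈ 𝒢 = (1/√5)·A·𝒪, one has ‖X̃₂X₁‖_F² ≥ 2/5. -/
open Matrix

/-- The golden number θ = (1+√5)/2, as a complex number. -/
noncomputable def gold : ℂ := (1 + Real.sqrt 5) / 2

/-- Squared Frobenius norm of a 2×2 complex matrix. -/
noncomputable def fro2 (M : Matrix (Fin 2) (Fin 2) ℂ) : ℝ :=
  ∑ i, ∑ j, ‖M i j‖ ^ 2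

/-- The element `a + bθ + i(c + dθ)` of `ℤ[i,θ]`. -/
noncomputable def zit (a b c d : ℤ) : ℂ :=
  (a : ℂ) + b * gold + Complex.I * ((c : ℂ) + d * gold)

/-- Its conjugate under `θ ↦ 1 − θ`. -/
noncomputable def zitBar (a b c d : ℤ) : ℂ :=
  (a : ℂ) + b * (1 - gold) + Complex.I * ((c : ℂ) + d * (1 - gold))

/-- The matrix `[[w₁, w₂], [i·w̄₂, w̄₁]]` of the order `𝒪`, with
`w₁ = a + bθ + i(c+dθ)` and `w₂ = e + fθ + i(g+hθ)`. -/
noncomputable def Omat (a b c d e f g h : ℤ) : Matrix (Fin 2) (Fin 2) ℂ :=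
  !![zit a b c d, zit e f g h;
     Complex.I * zitBar e f g h, zitBar a b c d]

/-- Membership in the order `𝒪`. -/
def inO (W : Matrix (Fin 2) (Fin 2) ℂ) : Prop :=
  ∃ a b c d e f g h : ℤ, W = Omat a b c d e f g h

/-- `α = 1 + i·θ̄ = 1 + i(1−θ)`. -/
noncomputable def alphaG : ℂ := 1 + Complex.I * (1 - gold)

/-- `ᾱ = 1 + i·θ`. -/
noncomputable def alphaBarG : ℂ := 1 + Complex.I * gold

/-- `A = diag(α, ᾱ)`. -/
noncomputable def Amat : Matrix (Fin 2) (Fin 2) ℂ := !![alphaG, 0; 0, alphaBarG]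

/-- Membership in the Golden Code `𝒢 = (1/√5)·A·𝒪`. -/
def inG (X : Matrix (Fin 2) (Fin 2) ℂ) : Prop :=
  ∃ W, inO W ∧ X = ((Real.sqrt 5 : ℂ))⁻¹ • (Amat * W)

lemma goldSq : gold ^ 2 = gold + 1 := by
  have hs : ((Real.sqrt 5 : ℝ) : ℂ) ^ 2 = 5 := by
    rw [← Complex.ofReal_pow, Real.sq_sqrt (by norm_num : (0:ℝ) ≤ 5)]
    norm_num
  unfold gold
  linear_combination hs / 4

lemma detO (a b c d e f g h : ℤ) :
    (Omat a b c d e f g h).det =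
      ((a^2 + a*b - b^2 - c^2 - c*d + d^2 + 2*e*g + e*h + f*g - 2*f*h : ℤ) : ℂ)
      + ((2*a*c + a*d + b*c - 2*b*d - e^2 - e*f + f^2 + g^2 + g*h - h^2 : ℤ) : ℂ) * Complex.I := by
  unfold Omat zit zitBar
  rw [Matrix.det_fin_two_of]
  push_cast
  linear_combination
    ((h:ℂ)*(h:ℂ)*Complex.I*Complex.I*Complex.I + 2*(f:ℂ)*(h:ℂ)*Complex.I*Complex.I
      + (f:ℂ)*(f:ℂ)*Complex.I - (d:ℂ)*(d:ℂ)*Complex.I*Complex.I - 2*(b:ℂ)*(d:ℂ)*Complex.I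
      - (b:ℂ)*(b:ℂ)) * goldSq
    + ((h:ℂ)*(h:ℂ)*Complex.I - (g:ℂ)*(h:ℂ)*Complex.I - (g:ℂ)*(g:ℂ)*Complex.I
      + 2*(f:ℂ)*(h:ℂ) - (f:ℂ)*(g:ℂ) - (e:ℂ)*(h:ℂ) - 2*(e:ℂ)*(g:ℂ)
      - (d:ℂ)*(d:ℂ) + (c:ℂ)*(d:ℂ) + (c:ℂ)*(c:ℂ)) * Complex.I_sq

lemma detA : Amat.det = 2 + Complex.I := by
  unfold Amat alphaG alphaBarG
  rw [Matrix.det_fin_two_of]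
  linear_combination goldSq + (gold - gold^2) * Complex.I_sq


lemma mod5a : ∀ A B R1 R2 : ZMod 5, A^2 - B^2 = -(2*R1*R2) → 2*A*B = R1^2 - R2^2 →
    A = 0 ∧ B = 0 ∧ R1 = 0 ∧ R2 = 0 := by decide


lemma keyDvd : ∀ x1 x2 y1 y2 u1 u2 v1 v2 : ℤ,
    x1^2 - x2^2 - 5*(y1^2 - y2^2) = -(2*u1*u2 - 10*v1*v2) →
    2*x1*x2 - 10*y1*y2 = u1^2 - u2^2 - 5*(v1^2 - v2^2) →
    (5:ℤ) ∣ x1 ∧ (5:ℤ) ∣ x2 ∧ (5:ℤ) ∣ u1 ∧ (5:ℤ) ∣ u2 := by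
  intro x1 x2 y1 y2 u1 u2 v1 v2 h1 h2
  have h5 : ((5:ℤ) : ZMod 5) = 0 := by decide
  have c1 : ((x1 : ZMod 5))^2 - (x2 : ZMod 5)^2 = -(2*(u1 : ZMod 5)*(u2 : ZMod 5)) := by
    have := congrArg (fun z : ℤ => (z : ZMod 5)) h1
    push_cast at this
    linear_combination this + ((y1:ZMod 5)^2 - (y2:ZMod 5)^2 + 2*(v1:ZMod 5)*(v2:ZMod 5)) * h5
  have c2 : 2*(x1 : ZMod 5)*(x2 : ZMod 5) = (u1 : ZMod 5)^2 - (u2 : ZMod 5)^2 := by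
    have := congrArg (fun z : ℤ => (z : ZMod 5)) h2
    push_cast at this
    linear_combination this + (2*(y1:ZMod 5)*(y2:ZMod 5) - (v1:ZMod 5)^2 + (v2:ZMod 5)^2) * h5
  obtain ⟨hA, hB, hU1, hU2⟩ := mod5a _ _ _ _ c1 c2
  exact ⟨(ZMod.intCast_zmod_eq_zero_iff_dvd x1 5).mp hA,
         (ZMod.intCast_zmod_eq_zero_iff_dvd x2 5).mp hB,
         (ZMod.intCast_zmod_eq_zero_iff_dvd u1 5).mp hU1,
         (ZMod.intCast_zmod_eq_zero_iff_dvd u2 5).mp hU2⟩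


lemma sq_eq_zero_of_le {a : ℤ} (h : a^2 ≤ 0) : a = 0 :=
  pow_eq_zero_iff two_ne_zero |>.mp (le_antisymm h (sq_nonneg a))


lemma four_ne (a b c d : ℤ) (h : ¬(a = 0 ∧ b = 0 ∧ c = 0 ∧ d = 0)) :
    1 ≤ a^2 + b^2 + c^2 + d^2 := by
  by_contra hcon
  push_neg at hcon
  exact h ⟨sq_eq_zero_of_le (by nlinarith [sq_nonneg a, sq_nonneg b, sq_nonneg c, sq_nonneg d]),
    sq_eq_zero_of_le (by nlinarith [sq_nonneg a, sq_nonneg b, sq_nonneg c, sq_nonneg d]),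
    sq_eq_zero_of_le (by nlinarith [sq_nonneg a, sq_nonneg b, sq_nonneg c, sq_nonneg d]),
    sq_eq_zero_of_le (by nlinarith [sq_nonneg a, sq_nonneg b, sq_nonneg c, sq_nonneg d])⟩


lemma descent : ∀ n : ℕ, ∀ p1 p2 q1 q2 r1 r2 s1 s2 : ℤ,
    p1^2 + p2^2 + q1^2 + q2^2 + r1^2 + r2^2 + s1^2 + s2^2 ≤ (n:ℤ) →
    p1^2 - p2^2 - 5*(q1^2 - q2^2) = -(2*r1*r2 - 10*s1*s2) →
    2*p1*p2 - 10*q1*q2 = r1^2 - r2^2 - 5*(s1^2 - s2^2) →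
    p1 = 0 ∧ p2 = 0 ∧ q1 = 0 ∧ q2 = 0 ∧ r1 = 0 ∧ r2 = 0 ∧ s1 = 0 ∧ s2 = 0 := by
  intro n
  induction n using Nat.strong_induction_on with
  | _ n IH =>
  intro p1 p2 q1 q2 r1 r2 s1 s2 hle hE1 hE2
  obtain ⟨hp1, hp2, hr1, hr2⟩ := keyDvd p1 p2 q1 q2 r1 r2 s1 s2 hE1 hE2
  obtain ⟨a, rfl⟩ := hp1
  obtain ⟨b, rfl⟩ := hp2
  obtain ⟨c, rfl⟩ := hr1
  obtain ⟨d, rfl⟩ := hr2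
  by_cases habcd : a = 0 ∧ b = 0 ∧ c = 0 ∧ d = 0
  · obtain ⟨rfl, rfl, rfl, rfl⟩ := habcd
    have hF1 : q1^2 - q2^2 - 5*((0:ℤ)^2 - (0:ℤ)^2) = -(2*s1*s2 - 10*0*0) := by linarith
    have hF2 : 2*q1*q2 - 10*(0:ℤ)*(0:ℤ) = s1^2 - s2^2 - 5*((0:ℤ)^2 - (0:ℤ)^2) := by linarith
    obtain ⟨hq1, hq2, hs1, hs2⟩ := keyDvd q1 q2 0 0 s1 s2 0 0 hF1 hF2
    obtain ⟨e, rfl⟩ := hq1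
    obtain ⟨f, rfl⟩ := hq2
    obtain ⟨g, rfl⟩ := hs1
    obtain ⟨h, rfl⟩ := hs2
    have hT : (0:ℤ) ≤ e^2 + f^2 + g^2 + h^2 := by positivity
    rcases eq_or_lt_of_le hT with hT0 | hT1
    · have he : e = 0 := by nlinarith [sq_nonneg e, sq_nonneg f, sq_nonneg g, sq_nonneg h]
      have hf : f = 0 := by nlinarith [sq_nonneg e, sq_nonneg f, sq_nonneg g, sq_nonneg h]
      have hg : g = 0 := by nlinarith [sq_nonneg e, sq_nonneg f, sq_nonneg g, sq_nonneg h]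
      have hh : h = 0 := by nlinarith [sq_nonneg e, sq_nonneg f, sq_nonneg g, sq_nonneg h]
      exact ⟨by norm_num, by norm_num, by simp [he], by simp [hf],
             by norm_num, by norm_num, by simp [hg], by simp [hh]⟩
    · have hcast : ((e^2 + f^2 + g^2 + h^2).toNat : ℤ) = e^2 + f^2 + g^2 + h^2 :=
        Int.toNat_of_nonneg hT
      have hml : (e^2 + f^2 + g^2 + h^2).toNat < n := by
        have h25 : 25*(e^2 + f^2 + g^2 + h^2) ≤ (n:ℤ) := by linarith
        have : ((e^2 + f^2 + g^2 + h^2).toNat : ℤ) < (n:ℤ) := by linarith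
        exact_mod_cast this
      obtain ⟨he, hf, -, -, hg, hh, -, -⟩ :=
        IH _ hml e f 0 0 g h 0 0 (by linarith) (by linarith) (by linarith)
      exact ⟨by norm_num, by norm_num, by simp [he], by simp [hf],
             by norm_num, by norm_num, by simp [hg], by simp [hh]⟩
  · have hab : 1 ≤ a^2 + b^2 + c^2 + d^2 := four_ne a b c d habcd
    have hE1' : q1^2 - q2^2 - 5*(a^2 - b^2) = -(2*s1*s2 - 10*c*d) := by linarith
    have hE2' : 2*q1*q2 - 10*a*b = s1^2 - s2^2 - 5*(c^2 - d^2) := by linarith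
    have hpos : (0:ℤ) ≤ q1^2 + q2^2 + a^2 + b^2 + s1^2 + s2^2 + c^2 + d^2 := by positivity
    have hcast : ((q1^2 + q2^2 + a^2 + b^2 + s1^2 + s2^2 + c^2 + d^2).toNat : ℤ)
        = q1^2 + q2^2 + a^2 + b^2 + s1^2 + s2^2 + c^2 + d^2 := Int.toNat_of_nonneg hpos
    have hml : (q1^2 + q2^2 + a^2 + b^2 + s1^2 + s2^2 + c^2 + d^2).toNat < n := by
      have hsum : q1^2 + q2^2 + a^2 + b^2 + s1^2 + s2^2 + c^2 + d^2 + 24 ≤ (n:ℤ) := by linarith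
      have : ((q1^2 + q2^2 + a^2 + b^2 + s1^2 + s2^2 + c^2 + d^2).toNat : ℤ) < (n:ℤ) := by linarith
      exact_mod_cast this
    obtain ⟨hq1, hq2, ha, hb, hs1, hs2, hc, hd⟩ :=
      IH _ hml q1 q2 a b s1 s2 c d (by linarith) hE1' hE2'
    exact ⟨by simp [ha], by simp [hb], hq1, hq2, by simp [hc], by simp [hd], hs1, hs2⟩


lemma UV_zero (a b c d e f g h : ℤ)
    (hU : a^2 + a*b - b^2 - c^2 - c*d + d^2 + 2*e*g + e*h + f*g - 2*f*h = 0)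
    (hV : 2*a*c + a*d + b*c - 2*b*d - e^2 - e*f + f^2 + g^2 + g*h - h^2 = 0) :
    a = 0 ∧ b = 0 ∧ c = 0 ∧ d = 0 ∧ e = 0 ∧ f = 0 ∧ g = 0 ∧ h = 0 := by
  have hE1 : (2*a+b)^2 - (2*c+d)^2 - 5*(b^2 - d^2) = -(2*(2*e+f)*(2*g+h) - 10*f*h) := by
    linear_combination 4*hU
  have hE2 : 2*(2*a+b)*(2*c+d) - 10*b*d = (2*e+f)^2 - (2*g+h)^2 - 5*(f^2 - h^2) := by
    linear_combination 4*hV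
  obtain ⟨h1, h2, h3, h4, h5, h6, h7, h8⟩ :=
    descent ((2*a+b)^2 + (2*c+d)^2 + b^2 + d^2 + (2*e+f)^2 + (2*g+h)^2 + f^2 + h^2).toNat
      (2*a+b) (2*c+d) b d (2*e+f) (2*g+h) f h (Int.self_le_toNat _) hE1 hE2
  exact ⟨by omega, h3, by omega, h4, by omega, h7, by omega, h8⟩


lemma sqOneLe {a : ℤ} (ha : a ≠ 0) : 1 ≤ a^2 := by
  rcases ha.lt_or_gt with h | h <;> nlinarith


lemma normSq_int (u v : ℤ) :
    Complex.normSq ((u:ℂ) + (v:ℂ) * Complex.I) = ((u^2 + v^2 : ℤ) : ℝ) := by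
  rw [Complex.normSq_apply]
  simp [Complex.add_re, Complex.add_im, Complex.mul_re, Complex.mul_im,
    Complex.I_re, Complex.I_im, Complex.intCast_re, Complex.intCast_im]
  ring


lemma normSq_2I : Complex.normSq (2 + Complex.I) = 5 := by
  rw [Complex.normSq_apply]
  simp [Complex.add_re, Complex.add_im]
  norm_num


lemma fro2_ge (M : Matrix (Fin 2) (Fin 2) ℂ) : 2 * ‖M.det‖ ≤ fro2 M := by
  rw [Matrix.det_fin_two]
  have htri : ‖M 0 0 * M 1 1 - M 0 1 * M 1 0‖ ≤
      ‖M 0 0‖ * ‖M 1 1‖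
        + ‖M 0 1‖ * ‖M 1 0‖ := by
    calc ‖M 0 0 * M 1 1 - M 0 1 * M 1 0‖
        ≤ ‖M 0 0 * M 1 1‖ + ‖M 0 1 * M 1 0‖ := by
          simpa [sub_eq_add_neg] using norm_add_le (M 0 0 * M 1 1) (-(M 0 1 * M 1 0))
      _ = _ := by rw [norm_mul, norm_mul]
  have e : fro2 M = ‖M 0 0‖^2 + ‖M 0 1‖^2
      + ‖M 1 0‖^2 + ‖M 1 1‖^2 := by
    simp [fro2, Fin.sum_univ_two]
    ring
  rw [e]
  nlinarith [sq_nonneg (‖M 0 0‖ - ‖M 1 1‖),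
    sq_nonneg (‖M 0 1‖ - ‖M 1 0‖), htri,
    norm_nonneg (M 0 0 * M 1 1 - M 0 1 * M 1 0)]


lemma Omat_zero : Omat 0 0 0 0 0 0 0 0 = 0 := by
  unfold Omat zit zitBar
  ext i j
  fin_cases i <;> fin_cases j <;> simp


lemma one_le_sq_add_sq {x y : ℤ} (h : ¬(x = 0 ∧ y = 0)) : 1 ≤ x^2 + y^2 := by
  rcases not_and_or.mp h with hne | hne
  · linarith [sqOneLe hne, sq_nonneg y]
  · linarith [sqOneLe hne, sq_nonneg x]


lemma normSq_detG (a b c d e f g h : ℤ) (X : Matrix (Fin 2) (Fin 2) ℂ)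
    (hX : X = ((Real.sqrt 5 : ℂ))⁻¹ • (Amat * Omat a b c d e f g h))
    (hX0 : X ≠ 0) : (1:ℝ)/5 ≤ Complex.normSq X.det := by
  have h5R : Real.sqrt 5 * Real.sqrt 5 = 5 := Real.mul_self_sqrt (by norm_num)
  have hdet : X.det = (((Real.sqrt 5 : ℂ))⁻¹)^2
      * (Amat.det * (Omat a b c d e f g h).det) := by
    rw [hX, Matrix.det_smul, Matrix.det_mul]
    norm_num
  have hns : Complex.normSq X.det =
      (((a^2 + a*b - b^2 - c^2 - c*d + d^2 + 2*e*g + e*h + f*g - 2*f*h)^2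
        + (2*a*c + a*d + b*c - 2*b*d - e^2 - e*f + f^2 + g^2 + g*h - h^2)^2 : ℤ) : ℝ) / 5 := by
    rw [hdet, _root_.map_mul, _root_.map_mul, map_pow, map_inv₀, detA, detO, normSq_int, normSq_2I,
      Complex.normSq_ofReal, h5R]
    ring
  have hUV : ¬(a^2 + a*b - b^2 - c^2 - c*d + d^2 + 2*e*g + e*h + f*g - 2*f*h = 0
      ∧ 2*a*c + a*d + b*c - 2*b*d - e^2 - e*f + f^2 + g^2 + g*h - h^2 = 0) := by
    rintro ⟨hU, hV⟩
    obtain ⟨rfl, rfl, rfl, rfl, rfl, rfl, rfl, rfl⟩ := UV_zero a b c d e f g h hU hV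
    refine hX0 ?_
    rw [hX, Omat_zero]
    simp
  have h1le : (1:ℤ) ≤ (a^2 + a*b - b^2 - c^2 - c*d + d^2 + 2*e*g + e*h + f*g - 2*f*h)^2
      + (2*a*c + a*d + b*c - 2*b*d - e^2 - e*f + f^2 + g^2 + g*h - h^2)^2 :=
    one_le_sq_add_sq hUV
  rw [hns]
  have hcast : (1:ℝ) ≤ (((a^2 + a*b - b^2 - c^2 - c*d + d^2 + 2*e*g + e*h + f*g - 2*f*h)^2
      + (2*a*c + a*d + b*c - 2*b*d - e^2 - e*f + f^2 + g^2 + g*h - h^2)^2 : ℤ) : ℝ) := by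
    exact_mod_cast h1le
  linarith


/-- For any nonzero Golden codewords `X₁, X₂ ∈ 𝒢`, `‖X̃₂·X₁‖_F² ≥ 2/5`. -/
theorem fro2_product_golden (X₁ X₂ : Matrix (Fin 2) (Fin 2) ℂ)
    (h₁ : inG X₁) (h₂ : inG X₂) (h₁0 : X₁ ≠ 0) (h₂0 : X₂ ≠ 0) :
    2 / 5 ≤ fro2 (X₂.adjugate * X₁) := by
  obtain ⟨W₁, hW₁, hX1⟩ := h₁
  obtain ⟨a1, b1, c1, d1, e1, f1, g1, hh1, rfl⟩ := hW₁
  obtain ⟨W₂, hW₂, hX2⟩ := h₂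
  obtain ⟨a2, b2, c2, d2, e2, f2, g2, hh2, rfl⟩ := hW₂
  have hns1 := normSq_detG a1 b1 c1 d1 e1 f1 g1 hh1 X₁ hX1 h₁0
  have hns2 := normSq_detG a2 b2 c2 d2 e2 f2 g2 hh2 X₂ hX2 h₂0
  have hDdet : (X₂.adjugate * X₁).det = X₂.det * X₁.det := by
    rw [Matrix.det_mul, Matrix.det_adjugate]
    norm_num
  have habs2 : ‖(X₂.adjugate * X₁).det‖^2
      = Complex.normSq X₂.det * Complex.normSq X₁.det := by
    rw [Complex.sq_norm, hDdet, _root_.map_mul]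
  have h25 : (1:ℝ)/25 ≤ ‖(X₂.adjugate * X₁).det‖^2 := by
    rw [habs2]
    nlinarith [hns1, hns2, Complex.normSq_nonneg X₁.det, Complex.normSq_nonneg X₂.det]
  have habs : (1:ℝ)/5 ≤ ‖(X₂.adjugate * X₁).det‖ := by
    nlinarith [norm_nonneg ((X₂.adjugate * X₁).det), h25]
  linarith [fro2_ge (X₂.adjugate * X₁)]
end

section
/- The quotient ring 𝒪/2𝒪 is isomorphic to the ring M₂(𝔽₂[i]) of 2×2 matrices over the ring 𝔽₂[i] = (ℤ[i])/(2); an isomorphism is determined by [1] ↦ I, [θ] ↦ [[1+i,1],[i,i]], [j] ↦ [[0,1],[i,0]], [θj] ↦ their product. -/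
open Matrix

/-- The matrix of `θ` under the embedding of the quaternion algebra in `M₂(ℂ)`. -/
noncomputable def Tmat : Matrix (Fin 2) (Fin 2) ℂ := !![gold, 0; 0, 1 - gold]

/-- The matrix of `j` (with `j² = i`, `jx = x̄j`). -/
noncomputable def Jmat : Matrix (Fin 2) (Fin 2) ℂ := !![0, 1; Complex.I, 0]

/-- The matrix of the central element `i`. -/
noncomputable def iOne : Matrix (Fin 2) (Fin 2) ℂ := Complex.I • (1 : Matrix (Fin 2) (Fin 2) ℂ)

/-- The order `𝒪 = ℤ[i,θ] ⊕ ℤ[i,θ]j`, as the subring of `M₂(ℂ)` generated by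
`i·𝟙`, `θ` and `j`. -/
noncomputable def OO : Subring (Matrix (Fin 2) (Fin 2) ℂ) :=
  Subring.closure {iOne, Tmat, Jmat}

/-- The ring `𝔽₂[i] = ℤ[i]/(2)`. -/
abbrev F2i : Type := GaussianInt ⧸ (Ideal.span {(2 : GaussianInt)})

/-- The class of `i` in `𝔽₂[i]`. -/
noncomputable def iF2i : F2i := Ideal.Quotient.mk _ (⟨0, 1⟩ : GaussianInt)


-- ==== auxiliary definitions ====

noncomputable def red : GaussianInt →+* F2i := Ideal.Quotient.mk _

noncomputable def gi : GaussianInt := ⟨0, 1⟩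

lemma red_gi : red gi = iF2i := rfl

lemma hφ : gold * gold = gold + 1 := by
  have h5 : ((Real.sqrt 5 : ℝ) : ℂ) ^ 2 = 5 := by
    rw [← Complex.ofReal_pow, Real.sq_sqrt (by norm_num : (5:ℝ) ≥ 0)]
    norm_num
  unfold gold
  linear_combination (1/4 : ℂ) * h5

lemma h2g : (2 * gold - 1 : ℂ) ≠ 0 := by
  have hsq : (2 * gold - 1) ^ 2 = 5 := by linear_combination 4 * hφ
  intro h
  rw [h] at hsq
  norm_num at hsq

/-- the coefficient parametrization of `𝒪` -/
noncomputable def fmat (a b c d : GaussianInt) : Matrix (Fin 2) (Fin 2) ℂ :=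
  !![(a : ℂ) + b * gold, (c : ℂ) + d * gold;
     Complex.I * ((c : ℂ) + d * (1 - gold)), (a : ℂ) + b * (1 - gold)]

lemma fmat_one : (1 : Matrix (Fin 2) (Fin 2) ℂ) = fmat 1 0 0 0 := by
  ext i j; fin_cases i <;> fin_cases j <;> simp [fmat, Matrix.one_apply]

lemma fmat_zero : (0 : Matrix (Fin 2) (Fin 2) ℂ) = fmat 0 0 0 0 := by
  ext i j; fin_cases i <;> fin_cases j <;> simp [fmat]

lemma fmat_iOne : iOne = fmat gi 0 0 0 := by
  ext i j; fin_cases i <;> fin_cases j <;>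
    simp [fmat, iOne, gi, Matrix.one_apply, GaussianInt.toComplex_def]

lemma fmat_Tmat : Tmat = fmat 0 1 0 0 := by
  ext i j; fin_cases i <;> fin_cases j <;> simp [fmat, Tmat]

lemma fmat_Jmat : Jmat = fmat 0 0 1 0 := by
  ext i j; fin_cases i <;> fin_cases j <;> simp [fmat, Jmat]

lemma fmat_TJ : Tmat * Jmat = fmat 0 0 0 1 := by
  ext i j; fin_cases i <;> fin_cases j <;>
    simp [fmat, Tmat, Jmat, Matrix.mul_apply, Fin.sum_univ_two] <;> ring

lemma fmat_add (a b c d a' b' c' d' : GaussianInt) :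
    fmat a b c d + fmat a' b' c' d' = fmat (a+a') (b+b') (c+c') (d+d') := by
  ext i j; fin_cases i <;> fin_cases j <;>
    simp [fmat, map_add] <;> push_cast [GaussianInt.toComplex_add] <;> ring

lemma fmat_neg (a b c d : GaussianInt) :
    -fmat a b c d = fmat (-a) (-b) (-c) (-d) := by
  ext i j; fin_cases i <;> fin_cases j <;>
    simp [fmat] <;> push_cast [GaussianInt.toComplex_neg] <;> ring

lemma fmat_mul (a b c d a' b' c' d' : GaussianInt) :
    fmat a b c d * fmat a' b' c' d' =
      fmat (a*a' + b*b' + gi*(c*c' + c*d' - d*d'))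
           (a*b' + a'*b + b*b' + gi*(d*c' - c*d'))
           (a*c' + a'*c + c*b' + b*d' - d*b')
           (a*d' + d*a' + b*c' + b*d' - c*b') := by
  have hI : ((gi : GaussianInt) : ℂ) = Complex.I := by
    simp [gi, GaussianInt.toComplex_def]
  ext i j
  fin_cases i <;> fin_cases j <;>
    simp [fmat, Matrix.mul_apply, Fin.sum_univ_two, GaussianInt.toComplex_add,
      GaussianInt.toComplex_mul, GaussianInt.toComplex_sub, hI]
  · linear_combination ((b:ℂ)*b' - Complex.I*d*d') * hφ
  · linear_combination ((b:ℂ)*d' - (d:ℂ)*b') * hφ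
  · linear_combination (Complex.I*((b:ℂ)*d' - (d:ℂ)*b')) * hφ
  · linear_combination ((b:ℂ)*b' - Complex.I*d*d') * hφ

lemma mem_S {x : Matrix (Fin 2) (Fin 2) ℂ} (hx : x ∈ OO) :
    ∃ a b c d : GaussianInt, x = fmat a b c d := by
  induction hx using Subring.closure_induction with
  | mem x hx =>
    rcases hx with h | h | h
    · exact ⟨gi, 0, 0, 0, h ▸ fmat_iOne⟩
    · exact ⟨0, 1, 0, 0, h ▸ fmat_Tmat⟩
    · exact ⟨0, 0, 1, 0, h ▸ fmat_Jmat⟩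
  | zero => exact ⟨0, 0, 0, 0, fmat_zero⟩
  | one => exact ⟨1, 0, 0, 0, fmat_one⟩
  | add x y hx hy ihx ihy =>
    obtain ⟨a,b,c,d,rfl⟩ := ihx
    obtain ⟨a',b',c',d',rfl⟩ := ihy
    exact ⟨_, _, _, _, fmat_add ..⟩
  | neg x hx ihx =>
    obtain ⟨a,b,c,d,rfl⟩ := ihx
    exact ⟨_, _, _, _, fmat_neg ..⟩
  | mul x y hx hy ihx ihy =>
    obtain ⟨a,b,c,d,rfl⟩ := ihx
    obtain ⟨a',b',c',d',rfl⟩ := ihy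
    exact ⟨_, _, _, _, fmat_mul ..⟩  -- gives x*y = fmat ...

lemma fmat_inj {a b c d a' b' c' d' : GaussianInt}
    (h : fmat a b c d = fmat a' b' c' d') : a = a' ∧ b = b' ∧ c = c' ∧ d = d' := by
  have e00 := congrFun (congrFun h 0) 0
  have e01 := congrFun (congrFun h 0) 1
  have e10 := congrFun (congrFun h 1) 0
  have e11 := congrFun (congrFun h 1) 1
  simp [fmat] at e00 e01 e10 e11
  have hb : (b : ℂ) = b' := by
    have h1 : ((b : ℂ) - b') * (2 * gold - 1) = 0 := by linear_combination e00 - e11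
    exact sub_eq_zero.mp ((mul_eq_zero.mp h1).resolve_right h2g)
  have ha : (a : ℂ) = a' := by linear_combination e00 - gold * hb
  have hd : (d : ℂ) = d' := by
    have h1 : ((d : ℂ) - d') * (2 * gold - 1) = 0 := by
      linear_combination e01 - e10
    exact sub_eq_zero.mp ((mul_eq_zero.mp h1).resolve_right h2g)
  have hc : (c : ℂ) = c' := by linear_combination e01 - gold * hd
  exact ⟨GaussianInt.toComplex_inj.mp ha, GaussianInt.toComplex_inj.mp hb,
    GaussianInt.toComplex_inj.mp hc, GaussianInt.toComplex_inj.mp hd⟩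

-- ==== the F2i side ====

lemma red_two : red 2 = 0 := by
  rw [red, Ideal.Quotient.eq_zero_iff_mem]
  exact Ideal.subset_span rfl

lemma h2F : (2 : F2i) = 0 := by
  rw [← _root_.map_ofNat red 2, red_two]

lemma hiF : iF2i * iF2i + 1 = 0 := by
  have h : gi * gi = -1 := by decide
  have : red gi * red gi = red (-1) := by rw [← _root_.map_mul, h]
  rw [red_gi] at this
  rw [this, _root_.map_neg, _root_.map_one]
  ring

/-- parametrization of matrices over F2i by quadruples of Gaussian integers -/
noncomputable def gmat (a b c d : GaussianInt) : Matrix (Fin 2) (Fin 2) F2i :=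
  !![red a + red b * (1 + iF2i) + red d * iF2i,
     red b + red c + red d * (1 + iF2i);
     red b * iF2i + red c * iF2i + red d * (iF2i * iF2i),
     red a + red b * iF2i + red d * iF2i]

set_option maxHeartbeats 1600000 in
lemma gmat_mul (a b c d a' b' c' d' : GaussianInt) :
    gmat (a*a' + b*b' + gi*(c*c' + c*d' - d*d'))
         (a*b' + a'*b + b*b' + gi*(d*c' - c*d'))
         (a*c' + a'*c + c*b' + b*d' - d*b')
         (a*d' + d*a' + b*c' + b*d' - c*b') = gmat a b c d * gmat a' b' c' d' := by
  have hi := hiF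
  have h2 := h2F
  ext i j
  fin_cases i <;> fin_cases j <;>
    simp [gmat, Matrix.mul_apply, Fin.sum_univ_two, _root_.map_add, _root_.map_mul,
      _root_.map_sub, red_gi]
  · linear_combination ((-2)*(red d)*(red d') - (red d)*(red d')*iF2i + (-2)*(red d)*(red b') + (-2)*(red c)*(red d') + (-2)*(red b)*(red d') - (red b)*(red b')) * hi + ((red d)*(red d') + (red d)*(red b') - (red d)*(red b')*iF2i + (red c)*(red d') - (red c)*(red b')*iF2i + (red b)*(red d') + (red b)*(red b') - (red b)*(red b')*iF2i) * h2
  · linear_combination ((-2)*(red d)*(red d') - (red d)*(red b') - (red b)*(red d')) * hi + ((red d)*(red d') - (red d)*(red d')*iF2i - (red d)*(red b')*iF2i - (red c)*(red d')*iF2i - (red c)*(red b')*iF2i + (red b)*(red d') - (red b)*(red d')*iF2i - (red b)*(red b')*iF2i) * h2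
  · linear_combination ((-2)*(red d)*(red d')*iF2i + (-2)*(red d)*(red b') - (red d)*(red b')*iF2i + (-2)*(red c)*(red d') + (-2)*(red c)*(red b') - (red b)*(red d')*iF2i + (-2)*(red b)*(red b')) * hi + ((red d)*(red d')*iF2i + (red d)*(red b') + (red c)*(red d') + (red c)*(red b') + (red b)*(red d')*iF2i + (red b)*(red b')) * h2
  · linear_combination ((-2)*(red d)*(red d') - (red d)*(red d')*iF2i + (-2)*(red d)*(red b') + (-2)*(red c)*(red d') + (-2)*(red b)*(red d') - (red b)*(red b')) * hi + ((red d)*(red d') + (red d)*(red b') + (red c)*(red d') - (red c)*(red b')*iF2i + (red b)*(red d') + (red b)*(red b')) * h2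

lemma gmat_add (a b c d a' b' c' d' : GaussianInt) :
    gmat (a+a') (b+b') (c+c') (d+d') = gmat a b c d + gmat a' b' c' d' := by
  ext i j
  fin_cases i <;> fin_cases j <;> simp [gmat, _root_.map_add] <;> ring

lemma gmat_one : gmat 1 0 0 0 = 1 := by
  ext i j
  fin_cases i <;> fin_cases j <;> simp [gmat, Matrix.one_apply]

lemma gmat_zero : gmat 0 0 0 0 = 0 := by
  ext i j
  fin_cases i <;> fin_cases j <;> simp [gmat]

-- ==== coefficients of an element of OO ====

noncomputable def coA (x : OO) : GaussianInt := (mem_S x.2).choose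
noncomputable def coB (x : OO) : GaussianInt := (mem_S x.2).choose_spec.choose
noncomputable def coC (x : OO) : GaussianInt := (mem_S x.2).choose_spec.choose_spec.choose
noncomputable def coD (x : OO) : GaussianInt :=
  (mem_S x.2).choose_spec.choose_spec.choose_spec.choose

lemma co_spec (x : OO) :
    (x : Matrix (Fin 2) (Fin 2) ℂ) = fmat (coA x) (coB x) (coC x) (coD x) :=
  (mem_S x.2).choose_spec.choose_spec.choose_spec.choose_spec

lemma co_eq {x : OO} {a b c d : GaussianInt}
    (h : (x : Matrix (Fin 2) (Fin 2) ℂ) = fmat a b c d) :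
    coA x = a ∧ coB x = b ∧ coC x = c ∧ coD x = d :=
  fmat_inj ((co_spec x).symm.trans h)

noncomputable def ψ : OO →+* Matrix (Fin 2) (Fin 2) F2i where
  toFun x := gmat (coA x) (coB x) (coC x) (coD x)
  map_one' := by
    obtain ⟨ha, hb, hc, hd⟩ := co_eq (x := 1) (by rw [OneMemClass.coe_one]; exact fmat_one)
    rw [ha, hb, hc, hd, gmat_one]
  map_mul' x y := by
    obtain ⟨ha, hb, hc, hd⟩ := co_eq (x := x * y)
      (by rw [MulMemClass.coe_mul, co_spec x, co_spec y, fmat_mul])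
    rw [ha, hb, hc, hd, gmat_mul]
  map_zero' := by
    obtain ⟨ha, hb, hc, hd⟩ := co_eq (x := 0) (by rw [ZeroMemClass.coe_zero]; exact fmat_zero)
    rw [ha, hb, hc, hd, gmat_zero]
  map_add' x y := by
    obtain ⟨ha, hb, hc, hd⟩ := co_eq (x := x + y)
      (by rw [AddMemClass.coe_add, co_spec x, co_spec y, fmat_add])
    rw [ha, hb, hc, hd, gmat_add]

lemma ψ_apply (x : OO) : ψ x = gmat (coA x) (coB x) (coC x) (coD x) := rfl

lemma ψ_of {x : OO} {a b c d : GaussianInt}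
    (h : (x : Matrix (Fin 2) (Fin 2) ℂ) = fmat a b c d) : ψ x = gmat a b c d := by
  obtain ⟨ha, hb, hc, hd⟩ := co_eq h
  rw [ψ_apply, ha, hb, hc, hd]
-- ==== membership lemmas ====

lemma iOne_mem : iOne ∈ OO := Subring.subset_closure (by simp)
lemma Tmat_mem : Tmat ∈ OO := Subring.subset_closure (by simp)
lemma Jmat_mem : Jmat ∈ OO := Subring.subset_closure (by simp)

lemma fmat_decomp (a b c d : GaussianInt) :
    fmat a b c d =
      (a.re • (1 : Matrix (Fin 2) (Fin 2) ℂ) + a.im • iOne)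
      + (b.re • (1 : Matrix (Fin 2) (Fin 2) ℂ) + b.im • iOne) * Tmat
      + (c.re • (1 : Matrix (Fin 2) (Fin 2) ℂ) + c.im • iOne) * Jmat
      + (d.re • (1 : Matrix (Fin 2) (Fin 2) ℂ) + d.im • iOne) * (Tmat * Jmat) := by
  ext i j
  fin_cases i <;> fin_cases j <;>
    · simp only [fmat, iOne, Tmat, Jmat, Matrix.add_apply, Matrix.mul_apply, Fin.sum_univ_two,
        Matrix.smul_apply, Matrix.one_apply, GaussianInt.toComplex_def]
      simp [Matrix.one_apply, zsmul_eq_mul]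
      try ring

lemma fmat_mem (a b c d : GaussianInt) : fmat a b c d ∈ OO := by
  rw [fmat_decomp]
  exact add_mem (add_mem (add_mem
    (add_mem (zsmul_mem (one_mem _) _) (zsmul_mem iOne_mem _))
    (mul_mem (add_mem (zsmul_mem (one_mem _) _) (zsmul_mem iOne_mem _)) Tmat_mem))
    (mul_mem (add_mem (zsmul_mem (one_mem _) _) (zsmul_mem iOne_mem _)) Jmat_mem))
    (mul_mem (add_mem (zsmul_mem (one_mem _) _) (zsmul_mem iOne_mem _)) (mul_mem Tmat_mem Jmat_mem))

lemma fmat_two (a b c d : GaussianInt) :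
    fmat (2*a) (2*b) (2*c) (2*d) = (2 : ℂ) • fmat a b c d := by
  ext i j
  fin_cases i <;> fin_cases j <;>
    simp [fmat, GaussianInt.toComplex_mul, Matrix.smul_apply,
      _root_.map_ofNat GaussianInt.toComplex 2] <;> ring

lemma gmat_two (a b c d : GaussianInt) : gmat (2*a) (2*b) (2*c) (2*d) = 0 := by
  ext i j
  fin_cases i <;> fin_cases j <;>
    simp [gmat, _root_.map_mul, red_two]

-- ==== kernel ====

lemma gmat_eq_zero {a b c d : GaussianInt} (h : gmat a b c d = 0) :
    red a = 0 ∧ red b = 0 ∧ red c = 0 ∧ red d = 0 := by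
  have hi := hiF
  have e00 := congrFun (congrFun h 0) 0
  have e01 := congrFun (congrFun h 0) 1
  have e10 := congrFun (congrFun h 1) 0
  have e11 := congrFun (congrFun h 1) 1
  simp [gmat] at e00 e01 e10 e11
  have hd : red d = 0 := by
    linear_combination (-iF2i*iF2i) * e01 + iF2i * e10 + (red d) * hi
  have hb : red b = 0 := by linear_combination e00 - e11
  have hc : red c = 0 := by linear_combination e01 - hb - (1 + iF2i) * hd
  have ha : red a = 0 := by linear_combination e11 - iF2i * hb - iF2i * hd
  exact ⟨ha, hb, hc, hd⟩

lemma red_zero_iff {a : GaussianInt} : red a = 0 ↔ ∃ a₀, a = 2 * a₀ := by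
  rw [red, Ideal.Quotient.eq_zero_iff_mem, Ideal.mem_span_singleton]
  exact dvd_iff_exists_eq_mul_left.trans
    ⟨fun ⟨c, hc⟩ => ⟨c, by rw [hc]; ring⟩, fun ⟨c, hc⟩ => ⟨c, by rw [hc]; ring⟩⟩

lemma ker_ψ (x : OO) : ψ x = 0 ↔ ∃ y : OO,
    (x : Matrix (Fin 2) (Fin 2) ℂ) = (2 : ℂ) • (y : Matrix (Fin 2) (Fin 2) ℂ) := by
  constructor
  · intro h
    rw [ψ_apply] at h
    obtain ⟨ha, hb, hc, hd⟩ := gmat_eq_zero h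
    obtain ⟨a₀, ha₀⟩ := red_zero_iff.mp ha
    obtain ⟨b₀, hb₀⟩ := red_zero_iff.mp hb
    obtain ⟨c₀, hc₀⟩ := red_zero_iff.mp hc
    obtain ⟨d₀, hd₀⟩ := red_zero_iff.mp hd
    refine ⟨⟨fmat a₀ b₀ c₀ d₀, fmat_mem a₀ b₀ c₀ d₀⟩, ?_⟩
    rw [co_spec x, ha₀, hb₀, hc₀, hd₀, fmat_two]
  · rintro ⟨y, hy⟩
    have : (x : Matrix (Fin 2) (Fin 2) ℂ) =
        fmat (2 * coA y) (2 * coB y) (2 * coC y) (2 * coD y) := by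
      rw [hy, co_spec y, fmat_two]
    rw [ψ_of this, gmat_two]
-- ==== values ====

lemma gmat_T : gmat 0 1 0 0 = !![1 + iF2i, 1; iF2i, iF2i] := by
  ext i j
  fin_cases i <;> fin_cases j <;> simp [gmat]

lemma gmat_J : gmat 0 0 1 0 = !![0, 1; iF2i, 0] := by
  ext i j
  fin_cases i <;> fin_cases j <;> simp [gmat]

lemma gmat_TJ : gmat 0 0 0 1 = !![1 + iF2i, 1; iF2i, iF2i] * !![0, 1; iF2i, 0] := by
  ext i j
  fin_cases i <;> fin_cases j <;>
    simp [gmat, Matrix.mul_apply, Fin.sum_univ_two] <;> try ring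

lemma gmat_i : gmat gi 0 0 0 = !![iF2i, 0; 0, iF2i] := by
  ext i j
  fin_cases i <;> fin_cases j <;> simp [gmat, red_gi]

-- ==== surjectivity ====

lemma gmat_surj (g00 g01 g10 g11 : GaussianInt) :
    gmat (g11 - (g00 - g11) * gi - (g01 + gi * g10) * gi)
         (g00 - g11)
         (g01 - (g00 - g11) - (g01 + gi * g10) * (1 + gi))
         (g01 + gi * g10) = !![red g00, red g01; red g10, red g11] := by
  have hi := hiF
  ext i j
  fin_cases i <;> fin_cases j
  · simp [gmat, _root_.map_add, _root_.map_sub, _root_.map_mul, _root_.map_one, red_gi]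
    try ring
  · simp [gmat, _root_.map_add, _root_.map_sub, _root_.map_mul, _root_.map_one, red_gi]
    try ring
  · simp [gmat, _root_.map_add, _root_.map_sub, _root_.map_mul, _root_.map_one, red_gi]
    try linear_combination (-(red g10)) * hi
  · simp [gmat, _root_.map_add, _root_.map_sub, _root_.map_mul, _root_.map_one, red_gi]
    try ring
lemma ψ_surj : Function.Surjective ψ := by
  intro M
  obtain ⟨g00, h00⟩ := Ideal.Quotient.mk_surjective (M 0 0)
  obtain ⟨g01, h01⟩ := Ideal.Quotient.mk_surjective (M 0 1)
  obtain ⟨g10, h10⟩ := Ideal.Quotient.mk_surjective (M 1 0)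
  obtain ⟨g11, h11⟩ := Ideal.Quotient.mk_surjective (M 1 1)
  refine ⟨⟨fmat (g11 - (g00 - g11) * gi - (g01 + gi * g10) * gi) (g00 - g11)
      (g01 - (g00 - g11) - (g01 + gi * g10) * (1 + gi)) (g01 + gi * g10),
      fmat_mem _ _ _ _⟩, ?_⟩
  rw [ψ_of rfl, gmat_surj]
  have h00' : red g00 = M 0 0 := h00
  have h01' : red g01 = M 0 1 := h01
  have h10' : red g10 = M 1 0 := h10
  have h11' : red g11 = M 1 1 := h11
  rw [h00', h01', h10', h11']
  exact (Matrix.eta_fin_two M).symm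

/-- The quotient `𝒪/2𝒪` is isomorphic to `M₂(𝔽₂[i])`: there is a surjective ring
homomorphism `ψ : 𝒪 → M₂(𝔽₂[i])` whose kernel is exactly `2𝒪`, determined by
`θ ↦ [[1+i,1],[i,i]]`, `j ↦ [[0,1],[i,0]]` (hence `θj` maps to their product, and
`i·𝟙` to `i·I`). -/
theorem quotient_O_two :
    ∃ ψ : OO →+* Matrix (Fin 2) (Fin 2) F2i,
      Function.Surjective ψ ∧
      (∀ x : OO, ψ x = 0 ↔ ∃ y : OO,
        (x : Matrix (Fin 2) (Fin 2) ℂ) = (2 : ℂ) • (y : Matrix (Fin 2) (Fin 2) ℂ)) ∧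
      (∀ h : Tmat ∈ OO, ψ ⟨Tmat, h⟩ = !![1 + iF2i, 1; iF2i, iF2i]) ∧
      (∀ h : Jmat ∈ OO, ψ ⟨Jmat, h⟩ = !![0, 1; iF2i, 0]) ∧
      (∀ h : Tmat * Jmat ∈ OO,
        ψ ⟨Tmat * Jmat, h⟩ = !![1 + iF2i, 1; iF2i, iF2i] * !![0, 1; iF2i, 0]) ∧
      (∀ h : iOne ∈ OO, ψ ⟨iOne, h⟩ = !![iF2i, 0; 0, iF2i]) := by
  refine ⟨ψ, ψ_surj, ker_ψ, ?_, ?_, ?_, ?_⟩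
  · intro h
    rw [ψ_of (show ((⟨Tmat, h⟩ : OO) : Matrix (Fin 2) (Fin 2) ℂ) = fmat 0 1 0 0 from fmat_Tmat)]
    exact gmat_T
  · intro h
    rw [ψ_of (show ((⟨Jmat, h⟩ : OO) : Matrix (Fin 2) (Fin 2) ℂ) = fmat 0 0 1 0 from fmat_Jmat)]
    exact gmat_J
  · intro h
    rw [ψ_of (show ((⟨Tmat * Jmat, h⟩ : OO) : Matrix (Fin 2) (Fin 2) ℂ) = fmat 0 0 0 1 from
      fmat_TJ)]
    exact gmat_TJ
  · intro h
    rw [ψ_of (show ((⟨iOne, h⟩ : OO) : Matrix (Fin 2) (Fin 2) ℂ) = fmat gi 0 0 0 from fmat_iOne)]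
    exact gmat_i
end
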